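/- For the load-flow map F: ℝ^N → ℝ^N and any two points u, w ∈ ℝ^N, the exact identity F(u) − F(w) = J((u + w)/2) (u − w) holds, where J is the Jacobian matrix of F. -/

import Mathlib

/-- Extension of a PQ-bus voltage vector `u : Fin N → ℝ` to bus indices `{0,…,N}`:
bus `k ∈ {1,…,N}` gets voltage `u (k-1)`, and bus `0` (the slack) gets `v₀`. -/
def extV (N : ℕ) (v₀ : ℝ) (u : Fin N → ℝ) : ℕ → ℝ :=
  fun k => if h : 1 ≤ k ∧ k ≤ N then u ⟨k - 1, by omega⟩ else v₀

/-- The load-flow map `F : ℝ^N → ℝ^N`, with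
`F_n(v) = (Σ_{k∈K(n)} g_{nk}) v_n² − (Σ_{k∈K(n)} g_{nk} v_k) v_n` for the PQ bus `n = i+1`. -/
def Fmap (N : ℕ) (K : ℕ → Finset ℕ) (g : ℕ → ℕ → ℝ) (v₀ : ℝ)
    (u : Fin N → ℝ) : Fin N → ℝ :=
  fun i => (∑ k ∈ K ((i : ℕ) + 1), g ((i : ℕ) + 1) k) * (u i) ^ 2
    - (∑ k ∈ K ((i : ℕ) + 1), g ((i : ℕ) + 1) k * extV N v₀ u k) * u i

/-- The Jacobian matrix `J(v)` of the load-flow map. -/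
def Jmat (N : ℕ) (K : ℕ → Finset ℕ) (g : ℕ → ℕ → ℝ) (v₀ : ℝ)
    (u : Fin N → ℝ) : Matrix (Fin N) (Fin N) ℝ :=
  Matrix.of fun i j =>
    if i = j then
      2 * (∑ k ∈ K ((i : ℕ) + 1), g ((i : ℕ) + 1) k) * u i
        - ∑ k ∈ K ((i : ℕ) + 1), g ((i : ℕ) + 1) k * extV N v₀ u k
    else if ((j : ℕ) + 1) ∈ K ((i : ℕ) + 1) then
      -(g ((i : ℕ) + 1) ((j : ℕ) + 1) * u i)
    else 0

/-- For the load-flow map `F` and any two points `u, w ∈ ℝ^N`, the exact identity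
`F(u) − F(w) = J((u + w)/2) (u − w)` holds. -/
theorem load_flow_mean_value_identity
    (N : ℕ) (hN : 1 ≤ N)
    (K : ℕ → Finset ℕ)
    (hKsub : ∀ n, n ≤ N → ∀ k ∈ K n, k ≤ N ∧ k ≠ n)
    (hKsymm : ∀ n, n ≤ N → ∀ k, k ≤ N → (k ∈ K n ↔ n ∈ K k))
    (g : ℕ → ℕ → ℝ)
    (hg : ∀ n k, k ∈ K n → 0 < g n k)
    (hgsymm : ∀ n k, g n k = g k n)
    (v₀ : ℝ) (hv₀ : 0 < v₀)
    (u w : Fin N → ℝ) :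
    Fmap N K g v₀ u - Fmap N K g v₀ w
      = (Jmat N K g v₀ (fun i => (u i + w i) / 2)).mulVec (u - w) := by
  funext i
  have hi1 : (i : ℕ) + 1 ≤ N := i.2
  have hmemS : ∀ k ∈ K ((i : ℕ) + 1), k ≤ N ∧ k ≠ (i : ℕ) + 1 := hKsub _ hi1
  have hiS : (i : ℕ) + 1 ∉ K ((i : ℕ) + 1) := fun h => (hmemS _ h).2 rfl
  set S := K ((i : ℕ) + 1) with hSdef
  set a : ℕ → ℝ := extV N v₀ u with ha
  set b : ℕ → ℝ := extV N v₀ w with hb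
  have hmid : ∀ k, extV N v₀ (fun n => (u n + w n) / 2) k = (a k + b k) / 2 := by
    intro k
    simp only [extV, ha, hb]
    split <;> ring
  simp only [Pi.sub_apply, Fmap, Matrix.mulVec, dotProduct, Jmat, Matrix.of_apply, hmid]
  -- split off the diagonal term
  rw [← Finset.add_sum_erase _ _ (Finset.mem_univ i)]
  rw [if_pos rfl]
  -- simplify the off-diagonal sum
  have hoff :
      (∑ j ∈ Finset.univ.erase i,
        (if i = j then
            2 * (∑ k ∈ S, g ((i : ℕ) + 1) k) * ((u i + w i) / 2)
              - ∑ k ∈ S, g ((i : ℕ) + 1) k * ((a k + b k) / 2)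
          else if ((j : ℕ) + 1) ∈ S then
            -(g ((i : ℕ) + 1) ((j : ℕ) + 1) * ((u i + w i) / 2))
          else 0) * (u j - w j))
      = ∑ k ∈ S, -(g ((i : ℕ) + 1) k * ((u i + w i) / 2)) * (a k - b k) := by
    rw [Finset.sum_congr rfl (fun j hj => by
      rw [if_neg (fun h => (Finset.mem_erase.mp hj).1 h.symm)])]
    rw [Finset.sum_erase (s := Finset.univ)
      (f := fun j : Fin N => (if ((j : ℕ) + 1) ∈ S then
        -(g ((i : ℕ) + 1) ((j : ℕ) + 1) * ((u i + w i) / 2)) else 0) * (u j - w j))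
      (by simp [hiS])]
    simp only [ite_mul, zero_mul]
    rw [← Finset.sum_filter]
    -- reindex: j ∈ Fin N with j+1 ∈ S  ↔  k ∈ S with 1 ≤ k
    have hrestr : (∑ k ∈ S, -(g ((i : ℕ) + 1) k * ((u i + w i) / 2)) * (a k - b k))
        = ∑ k ∈ S.filter (fun k => 1 ≤ k),
            -(g ((i : ℕ) + 1) k * ((u i + w i) / 2)) * (a k - b k) := by
      refine (Finset.sum_subset (Finset.filter_subset _ _) ?_).symm
      intro k hk hk'
      have hk0 : k = 0 := by
        simp only [Finset.mem_filter, hk, true_and] at hk'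
        omega
      subst hk0
      have : a 0 - b 0 = 0 := by simp [ha, hb, extV]
      rw [this, mul_zero]
    rw [hrestr]
    refine Finset.sum_bij' (fun (j : Fin N) _ => (j : ℕ) + 1)
      (fun k hk => (⟨k - 1, by
        have h2 := (hmemS k (Finset.mem_filter.mp hk).1).1
        have h1 := (Finset.mem_filter.mp hk).2
        omega⟩ : Fin N)) ?_ ?_ ?_ ?_ ?_
    · intro j hj
      simp only [Finset.mem_filter, Finset.mem_univ, true_and] at hj
      exact Finset.mem_filter.mpr ⟨hj, by omega⟩
    · intro k hk
      have h1 : 1 ≤ k := (Finset.mem_filter.mp hk).2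
      have h2 : k ∈ S := (Finset.mem_filter.mp hk).1
      simp only [Finset.mem_filter, Finset.mem_univ, true_and]
      have hkk : k - 1 + 1 = k := by omega
      rw [hkk]
      exact h2
    · intro j hj
      ext
      simp
    · intro k hk
      dsimp only
      have h1 : 1 ≤ k := (Finset.mem_filter.mp hk).2
      omega
    · intro j hj
      have hjN : (j : ℕ) + 1 ≤ N := j.2
      have hau : a ((j : ℕ) + 1) = u j := by
        simp only [ha, extV]
        rw [dif_pos ⟨by omega, hjN⟩]
        exact congrArg u (Fin.ext (by simp))
      have hbw : b ((j : ℕ) + 1) = w j := by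
        simp only [hb, extV]
        rw [dif_pos ⟨by omega, hjN⟩]
        exact congrArg w (Fin.ext (by simp))
      rw [hau, hbw]
  rw [hoff]
  -- now pure sum algebra
  set G := ∑ k ∈ S, g ((i : ℕ) + 1) k with hG
  set A := ∑ k ∈ S, g ((i : ℕ) + 1) k * a k with hA
  set B := ∑ k ∈ S, g ((i : ℕ) + 1) k * b k with hB
  have e1 : (∑ k ∈ S, g ((i : ℕ) + 1) k * ((a k + b k) / 2)) = (A + B) / 2 := by
    rw [hA, hB, ← Finset.sum_add_distrib, Finset.sum_div]
    exact Finset.sum_congr rfl (fun k _ => by ring)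
  have e2 : (∑ k ∈ S, -(g ((i : ℕ) + 1) k * ((u i + w i) / 2)) * (a k - b k))
      = -((u i + w i) / 2 * (A - B)) := by
    calc (∑ k ∈ S, -(g ((i : ℕ) + 1) k * ((u i + w i) / 2)) * (a k - b k))
        = ∑ k ∈ S, ((u i + w i) / 2 * (g ((i : ℕ) + 1) k * b k)
            - (u i + w i) / 2 * (g ((i : ℕ) + 1) k * a k)) :=
          Finset.sum_congr rfl (fun k _ => by ring)
      _ = (u i + w i) / 2 * B - (u i + w i) / 2 * A := by
          rw [Finset.sum_sub_distrib, ← Finset.mul_sum, ← Finset.mul_sum, hA, hB]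
      _ = -((u i + w i) / 2 * (A - B)) := by ring
  rw [e1, e2]
  ring
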